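/- For every n ≥ 1: (i) the polynomial P⁺_{2n} := p_{2n} + (b_{2n} − t1)·p_{2n−1} is even (invariant under x ↦ −x), and it is the unique monic even polynomial in the span of p_{2n} and p_{2n−1}; (ii) the polynomial P⁻_{2n} := p_{2n} + (b_{2n} + t1)·p_{2n−1} satisfies T1 P⁻_{2n} = −t1·P⁻_{2n}. Here b_{2n} = (γ_{2n}+t1+t0)(γ_{2n}+t1−t0)/(2γ_{2n}) − t1. -/

import Mathlib

open Polynomial

/-- For `n ≥ 1`:
(i) `P⁺_{2n} := p_{2n} + (b_{2n} − t1)·p_{2n−1}` is even, and it is the unique monic even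
polynomial in the span of `p_{2n}` and `p_{2n−1}`;
(ii) `P⁻_{2n} := p_{2n} + (b_{2n} + t1)·p_{2n−1}` satisfies `T1 P⁻_{2n} = −t1·P⁻_{2n}`. -/
theorem statement10 (t0 u0 t1 u1 a b c d : ℂ)
    (ha : a = t1 + u1) (hb : b = t1 - u1)
    (hc : c = t0 + u0 + 1/2) (hd : d = t0 - u0 + 1/2)
    (hreg : ∀ k : ℕ, 2*(t0 + t1) ≠ -(k : ℂ))
    (T0 T1 : Polynomial ℂ → Polynomial ℂ)
    (hT0 : ∀ (f : Polynomial ℂ) (x : ℂ),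
      (1 - 2*x) * ((T0 f).eval x - t0 * f.eval x) =
        (c - x) * (d - x) * (f.eval (1 - x) - f.eval x))
    (hT1 : ∀ (f : Polynomial ℂ) (x : ℂ),
      (2*x) * ((T1 f).eval x - t1 * f.eval x) =
        (a + x) * (b + x) * (f.eval (-x) - f.eval x))
    (γ : ℕ → ℂ)
    (hγe : ∀ n : ℕ, γ (2*n) = t0 + t1 + n)
    (hγo : ∀ n : ℕ, γ (2*n+1) = -(t0 + t1 + (n+1)))
    (p : ℕ → Polynomial ℂ)
    (hp : ∀ m : ℕ, (p m).Monic ∧ (p m).natDegree = m ∧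
      T0 (p m) + T1 (p m) = γ m • p m)
    (bb : ℕ → ℂ)
    (hbb : ∀ m : ℕ, bb m = (γ m + t1 + t0) * (γ m + t1 - t0) / (2 * γ m) - t1) :
    ∀ n : ℕ, 1 ≤ n →
      ((p (2*n) + (bb (2*n) - t1) • p (2*n - 1)).Monic ∧
       (∀ x : ℂ, (p (2*n) + (bb (2*n) - t1) • p (2*n - 1)).eval x =
          (p (2*n) + (bb (2*n) - t1) • p (2*n - 1)).eval (-x)) ∧
       (∀ q : Polynomial ℂ, q.Monic → (∀ x : ℂ, q.eval x = q.eval (-x)) →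
          (∃ α β : ℂ, q = α • p (2*n) + β • p (2*n - 1)) →
          q = p (2*n) + (bb (2*n) - t1) • p (2*n - 1))) ∧
      T1 (p (2*n) + (bb (2*n) + t1) • p (2*n - 1)) =
        (-t1) • (p (2*n) + (bb (2*n) + t1) • p (2*n - 1)) := by
  subst ha hb hc hd
  have h2X : (2 * X : ℂ[X]) ≠ 0 := fun h => by
    have := congrArg (eval 1) h; simp at this
  have hsX : ((4 : ℂ[X]) * (1 - 2 * X)) ≠ 0 := fun h => by
    have := congrArg (eval 0) h; simp at this
  -- polynomial versions of the defining identities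
  have hI1 : ∀ f : ℂ[X], (2*X : ℂ[X]) * (T1 f - C t1 * f)
      = (C t1 + C u1 + X) * (C t1 - C u1 + X) * (f.comp (-X) - f) := by
    intro f
    apply Polynomial.funext
    intro x
    simp only [eval_mul, eval_sub, eval_add, eval_C, eval_X, eval_comp, eval_neg,
      eval_ofNat]
    linear_combination hT1 f x
  have hI0 : ∀ f : ℂ[X], ((4:ℂ[X]) * (1 - 2*X)) * (T0 f - C t0 * f)
      = (2*C t0 + 2*C u0 + 1 - 2*X) * (2*C t0 - 2*C u0 + 1 - 2*X) * (f.comp (1 - X) - f) := by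
    intro f
    apply Polynomial.funext
    intro x
    simp only [eval_mul, eval_sub, eval_add, eval_C, eval_X, eval_comp, eval_neg,
      eval_ofNat, eval_one]
    linear_combination 4 * hT0 f x
  -- linearity
  have hT1add : ∀ f g : ℂ[X], T1 (f + g) = T1 f + T1 g := by
    intro f g
    have h := hI1 (f + g); rw [add_comp] at h
    apply mul_left_cancel₀ h2X
    linear_combination h - hI1 f - hI1 g
  have hT1sub : ∀ f g : ℂ[X], T1 (f - g) = T1 f - T1 g := by
    intro f g
    have h := hI1 (f - g); rw [sub_comp] at h
    apply mul_left_cancel₀ h2X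
    linear_combination h - hI1 f + hI1 g
  have hT1smul : ∀ (α : ℂ) (f : ℂ[X]), T1 (C α * f) = C α * T1 f := by
    intro α f
    have h := hI1 (C α * f); rw [mul_comp, C_comp] at h
    apply mul_left_cancel₀ h2X
    linear_combination h - C α * hI1 f
  have hT0add : ∀ f g : ℂ[X], T0 (f + g) = T0 f + T0 g := by
    intro f g
    have h := hI0 (f + g); rw [add_comp] at h
    apply mul_left_cancel₀ hsX
    linear_combination h - hI0 f - hI0 g
  have hT0sub : ∀ f g : ℂ[X], T0 (f - g) = T0 f - T0 g := by
    intro f g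
    have h := hI0 (f - g); rw [sub_comp] at h
    apply mul_left_cancel₀ hsX
    linear_combination h - hI0 f + hI0 g
  have hT0smul : ∀ (α : ℂ) (f : ℂ[X]), T0 (C α * f) = C α * T0 f := by
    intro α f
    have h := hI0 (C α * f); rw [mul_comp, C_comp] at h
    apply mul_left_cancel₀ hsX
    linear_combination h - C α * hI0 f
  -- Hecke relations
  have hH1 : ∀ f : ℂ[X], T1 (T1 f) = C t1 * (C t1 * f) := by
    intro f
    have h1 := hI1 f
    have h3 := hI1 (T1 f)
    have h2 := congrArg (fun q : ℂ[X] => q.comp (-X)) h1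
    simp only [mul_comp, sub_comp, add_comp, neg_comp, C_comp, X_comp, ofNat_comp,
      comp_assoc, neg_neg, comp_X] at h2
    apply mul_left_cancel₀ h2X
    apply mul_left_cancel₀ h2X
    linear_combination (2*X : ℂ[X]) * h3
      - ((C t1 + C u1 + X) * (C t1 - C u1 + X)) * h2
      + ((2*X : ℂ[X]) * C t1 - (C t1 + C u1 + X) * (C t1 - C u1 + X)) * h1
  have hH0 : ∀ f : ℂ[X], T0 (T0 f) = C t0 * (C t0 * f) := by
    intro f
    have h1 := hI0 f
    have h3 := hI0 (T0 f)
    have h2 := congrArg (fun q : ℂ[X] => q.comp (1 - X)) h1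
    simp only [mul_comp, sub_comp, add_comp, C_comp, X_comp, one_comp, ofNat_comp,
      comp_assoc, sub_sub_cancel, comp_X] at h2
    apply mul_left_cancel₀ hsX
    apply mul_left_cancel₀ hsX
    linear_combination ((4:ℂ[X]) * (1 - 2*X)) * h3
      - ((2*C t0 + 2*C u0 + 1 - 2*X) * (2*C t0 - 2*C u0 + 1 - 2*X)) * h2
      + (((4:ℂ[X]) * (1 - 2*X)) * C t0
          - (2*C t0 + 2*C u0 + 1 - 2*X) * (2*C t0 - 2*C u0 + 1 - 2*X)) * h1
  -- degree bound for Y = T0 + T1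
  have hYdeg : ∀ f : ℂ[X], (T0 f + T1 f).natDegree ≤ f.natDegree := by
    intro f
    by_cases hm0 : f.natDegree = 0
    · obtain ⟨k, rfl⟩ := natDegree_eq_zero.mp hm0
      have e1 : T1 (C k) = C t1 * C k := by
        apply mul_left_cancel₀ h2X
        have h := hI1 (C k); rw [C_comp] at h
        linear_combination h
      have e0 : T0 (C k) = C t0 * C k := by
        apply mul_left_cancel₀ hsX
        have h := hI0 (C k); rw [C_comp] at h
        linear_combination h
      rw [e0, e1, ← C_mul, ← C_mul, ← C_add, natDegree_C]
      exact Nat.zero_le _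
    · set m := f.natDegree with hm
      have hm1 : 1 ≤ m := Nat.one_le_iff_ne_zero.mpr hm0
      have hnegX : (-X : ℂ[X]).natDegree = 1 := by simp
      have honeX : ((1:ℂ[X]) - X).natDegree = 1 := by
        rw [show ((1:ℂ[X]) - X) = -(X - C 1) by rw [map_one]; ring, natDegree_neg,
          natDegree_X_sub_C]
      have hl1 : (f.comp (-X)).coeff m = f.leadingCoeff * (-1)^m := by
        have hc1 : (f.comp (-X)).natDegree = m := by rw [natDegree_comp, hnegX, mul_one]
        conv_lhs => rw [← hc1]
        rw [coeff_natDegree, leadingCoeff_comp (by rw [hnegX]; norm_num)]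
        rw [show (-X : ℂ[X]).leadingCoeff = -1 by rw [leadingCoeff_neg, leadingCoeff_X], ← hm]
      have hlc1X : ((1:ℂ[X]) - X).leadingCoeff = -1 := by
        rw [show ((1:ℂ[X]) - X) = -(X - C 1) by rw [map_one]; ring, leadingCoeff_neg,
          (monic_X_sub_C (1:ℂ)).leadingCoeff]
      have hl2 : (f.comp (1 - X)).coeff m = f.leadingCoeff * (-1)^m := by
        have hc2 : (f.comp (1 - X)).natDegree = m := by rw [natDegree_comp, honeX, mul_one]
        conv_lhs => rw [← hc2]
        rw [coeff_natDegree, leadingCoeff_comp (by rw [honeX]; norm_num)]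
        rw [hlc1X, ← hm]
      have hc1 : (f.comp (-X)).natDegree = m := by rw [natDegree_comp, hnegX, mul_one]
      have hc2 : (f.comp (1 - X)).natDegree = m := by rw [natDegree_comp, honeX, mul_one]
      have hg1d : (f.comp (-X) - f).natDegree ≤ m :=
        le_trans (natDegree_sub_le _ _) (by rw [hc1, ← hm, max_self])
      have hg2d : (f.comp (1 - X) - f).natDegree ≤ m :=
        le_trans (natDegree_sub_le _ _) (by rw [hc2, ← hm, max_self])
      have hdiff : ((f.comp (-X) - f) - (f.comp (1 - X) - f)).natDegree ≤ m - 1 := by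
        rw [natDegree_le_iff_coeff_eq_zero]
        intro N hN
        have hNm : m ≤ N := by omega
        rcases eq_or_lt_of_le hNm with hEq | hLt
        · rw [← hEq, coeff_sub, coeff_sub, coeff_sub, hl1, hl2]
          ring
        · rw [coeff_sub, coeff_eq_zero_of_natDegree_lt (lt_of_le_of_lt hg1d hLt),
            coeff_eq_zero_of_natDegree_lt (lt_of_le_of_lt hg2d hLt), sub_zero]
      have hkey : ((2*X : ℂ[X]) * ((4:ℂ[X]) * (1 - 2*X))) * (T0 f + T1 f - C (t0+t1) * f)
          = ((4:ℂ[X]) * (1 - 2*X)) * ((C t1 + C u1 + X) * (C t1 - C u1 + X))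
              * ((f.comp (-X) - f) - (f.comp (1 - X) - f))
            + (((4:ℂ[X]) * (1 - 2*X)) * ((C t1 + C u1 + X) * (C t1 - C u1 + X))
              + (2*X : ℂ[X]) * ((2*C t0 + 2*C u0 + 1 - 2*X) * (2*C t0 - 2*C u0 + 1 - 2*X)))
              * (f.comp (1 - X) - f) := by
        rw [map_add]
        linear_combination ((4:ℂ[X]) * (1 - 2*X)) * hI1 f + (2*X : ℂ[X]) * hI0 f
      have hQ : ((4:ℂ[X]) * (1 - 2*X)) * ((C t1 + C u1 + X) * (C t1 - C u1 + X))
              + (2*X : ℂ[X]) * ((2*C t0 + 2*C u0 + 1 - 2*X) * (2*C t0 - 2*C u0 + 1 - 2*X))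
          = C (4*t1^2 - 4*u1^2)
            + C (2 + 8*t0 + 8*t0^2 - 8*u0^2 + 8*t1 - 8*t1^2 + 8*u1^2) * X
            + C (-4 - 16*t0 - 16*t1) * X^2 := by
        simp only [map_add, map_sub, map_mul, map_pow, map_ofNat, map_one, map_neg]
        ring
      have hQd : (((4:ℂ[X]) * (1 - 2*X)) * ((C t1 + C u1 + X) * (C t1 - C u1 + X))
              + (2*X : ℂ[X]) * ((2*C t0 + 2*C u0 + 1 - 2*X) * (2*C t0 - 2*C u0 + 1 - 2*X))).natDegree
            ≤ 2 := by
        rw [hQ]; compute_degree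
      have hAB : (((4:ℂ[X]) * (1 - 2*X)) * ((C t1 + C u1 + X) * (C t1 - C u1 + X))).natDegree
            ≤ 3 := by
        compute_degree
      have hRd : (((4:ℂ[X]) * (1 - 2*X)) * ((C t1 + C u1 + X) * (C t1 - C u1 + X))
              * ((f.comp (-X) - f) - (f.comp (1 - X) - f))
            + (((4:ℂ[X]) * (1 - 2*X)) * ((C t1 + C u1 + X) * (C t1 - C u1 + X))
              + (2*X : ℂ[X]) * ((2*C t0 + 2*C u0 + 1 - 2*X) * (2*C t0 - 2*C u0 + 1 - 2*X)))
              * (f.comp (1 - X) - f)).natDegree ≤ m + 2 := by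
        apply le_trans (natDegree_add_le _ _)
        apply max_le
        · apply le_trans (natDegree_mul_le)
          omega
        · apply le_trans (natDegree_mul_le)
          omega
      by_cases hz : T0 f + T1 f - C (t0+t1) * f = 0
      · have hz' : T0 f + T1 f = C (t0+t1) * f := by linear_combination hz
        rw [hz']
        exact natDegree_C_mul_le _ _
      · have hprod : ((2*X : ℂ[X]) * ((4:ℂ[X]) * (1 - 2*X))) ≠ 0 :=
          mul_ne_zero h2X hsX
        have hpd : ((2*X : ℂ[X]) * ((4:ℂ[X]) * (1 - 2*X))).natDegree = 2 := by
          have e : ((2*X : ℂ[X]) * ((4:ℂ[X]) * (1 - 2*X))) = C (-16) * X^2 + C 8 * X := by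
            simp only [map_neg, map_ofNat]
            ring
          rw [e]
          compute_degree!
        have hmul := natDegree_mul hprod hz
        rw [hkey] at hmul
        have hzd : (T0 f + T1 f - C (t0+t1) * f).natDegree ≤ m := by
          rw [hpd] at hmul
          omega
        have e2 : T0 f + T1 f = (T0 f + T1 f - C (t0+t1) * f) + C (t0+t1) * f := by ring
        rw [e2]
        apply le_trans (natDegree_add_le _ _)
        exact max_le hzd (natDegree_C_mul_le _ _)
  -- injectivity of γ
  have hγinj : ∀ i j : ℕ, γ i = γ j → i = j := by
    have key : ∀ i : ℕ, (∃ k, i = 2*k ∧ γ i = t0+t1+k) ∨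
        (∃ k, i = 2*k+1 ∧ γ i = -(t0+t1+(k+1))) := by
      intro i
      rcases Nat.even_or_odd i with ⟨k, hk⟩ | ⟨k, hk⟩
      · exact Or.inl ⟨k, by omega, by rw [show i = 2*k by omega, hγe]⟩
      · exact Or.inr ⟨k, hk, by rw [hk, hγo]⟩
    intro i j h
    rcases key i with ⟨k, hk, hgk⟩ | ⟨k, hk, hgk⟩ <;>
      rcases key j with ⟨l, hl, hgl⟩ | ⟨l, hl, hgl⟩
    · rw [hgk, hgl] at h
      have : (k : ℂ) = l := by linear_combination h
      have := Nat.cast_injective (R := ℂ) this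
      omega
    · exfalso
      rw [hgk, hgl] at h
      apply hreg (k + l + 1)
      push_cast
      linear_combination h
    · exfalso
      rw [hgk, hgl] at h
      apply hreg (k + l + 1)
      push_cast
      linear_combination -h
    · rw [hgk, hgl] at h
      have : (k : ℂ) = l := by linear_combination -h
      have := Nat.cast_injective (R := ℂ) this
      omega
  -- spectral lemma
  have specD : ∀ m : ℕ, ∀ f : ℂ[X], f.natDegree = m → f ≠ 0 → ∀ lam : ℂ,
      T0 f + T1 f = C lam * f → lam = γ m ∧ f = C f.leadingCoeff * p m := by
    intro m
    induction m using Nat.strong_induction_on with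
    | _ m IH =>
      intro f hfd hf0 lam hY
      obtain ⟨hmon, hdegp, heig⟩ := hp m
      have heig' : T0 (p m) + T1 (p m) = C (γ m) * p m := by
        rw [heig, smul_eq_C_mul]
      have hlc0 : f.leadingCoeff ≠ 0 := leadingCoeff_ne_zero.mpr hf0
      have hYg : T0 (f - C f.leadingCoeff * p m) + T1 (f - C f.leadingCoeff * p m)
          = C lam * (f - C f.leadingCoeff * p m)
            + (C lam - C (γ m)) * (C f.leadingCoeff * p m) := by
        rw [hT0sub, hT1sub, hT0smul, hT1smul]
        linear_combination hY - C f.leadingCoeff * heig'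
      have hpm0 : p m ≠ 0 := hmon.ne_zero
      by_cases hg : f - C f.leadingCoeff * p m = 0
      · have hfe : f = C f.leadingCoeff * p m := by linear_combination hg
        constructor
        · rw [hg] at hYg
          have hz0 : T0 0 = 0 := by
            have := hT0smul 0 0; simpa using this
          have hz1 : T1 0 = 0 := by
            have := hT1smul 0 0; simpa using this
          rw [hz0, hz1] at hYg
          have h' : (C lam - C (γ m)) * (C f.leadingCoeff * p m) = 0 := by
            linear_combination -hYg
          rcases mul_eq_zero.mp h' with h'' | h''
          · exact C_injective (sub_eq_zero.mp h'')
          · exact absurd h'' (mul_ne_zero (by simpa using hlc0) hpm0)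
        · exact hfe
      · exfalso
        have hdegf : f.degree = (m : WithBot ℕ) := by
          rw [degree_eq_natDegree hf0, hfd]
        have hdegq : (C f.leadingCoeff * p m).degree = (m : WithBot ℕ) := by
          rw [degree_C_mul hlc0, degree_eq_natDegree hpm0, hdegp]
        have hdlt : (f - C f.leadingCoeff * p m).degree < f.degree := by
          apply degree_sub_lt (by rw [hdegf, hdegq]) hf0
          rw [leadingCoeff_mul, leadingCoeff_C, hmon.leadingCoeff, mul_one]
        have hgdlt : (f - C f.leadingCoeff * p m).natDegree < m := by
          have h' := natDegree_lt_natDegree hg hdlt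
          rwa [hfd] at h'
        have hYgd : (T0 (f - C f.leadingCoeff * p m)
            + T1 (f - C f.leadingCoeff * p m)).natDegree < m :=
          lt_of_le_of_lt (hYdeg _) hgdlt
        have hpmc : (p m).coeff m = 1 := by
          have h' := hmon.coeff_natDegree
          rwa [hdegp] at h'
        have hco := congrArg (fun q : ℂ[X] => q.coeff m) hYg
        simp only [coeff_eq_zero_of_natDegree_lt hYgd, coeff_add, ← map_sub,
          coeff_C_mul, coeff_eq_zero_of_natDegree_lt hgdlt, hpmc] at hco
        have hlam : lam = γ m := by
          have h2 : (lam - γ m) * f.leadingCoeff = 0 := by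
            linear_combination -hco
          rcases mul_eq_zero.mp h2 with h' | h'
          · linear_combination h'
          · exact absurd h' hlc0
        rw [hlam] at hYg
        have hYg' : T0 (f - C f.leadingCoeff * p m) + T1 (f - C f.leadingCoeff * p m)
            = C (γ m) * (f - C f.leadingCoeff * p m) := by
          linear_combination hYg
        obtain ⟨heq, -⟩ := IH _ hgdlt _ rfl hg _ hYg'
        exact absurd (hγinj _ _ heq) (by omega)
  -- the conjugation relation
  have hrel : ∀ (q : ℂ[X]) (μ : ℂ), T0 q + T1 q = C μ * q →
      T0 (T1 q) + T1 (T1 q)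
        = C μ * (C μ * q) + C t1 * (C t1 * q) - C t0 * (C t0 * q) - C μ * T1 q := by
    intro q μ hq
    have h2 := hH0 q
    have e : T0 q = C μ * q - T1 q := by linear_combination hq
    rw [e, hT0sub, hT0smul, e] at h2
    have h1 := hH1 q
    linear_combination h1 - h2
  -- now the main argument
  intro n hn
  obtain ⟨hmonP, hdegP, heigP0⟩ := hp (2*n)
  obtain ⟨hmonP', hdegP', heigP'0⟩ := hp (2*n - 1)
  have hPne : p (2*n) ≠ 0 := hmonP.ne_zero
  have hP'ne : p (2*n - 1) ≠ 0 := hmonP'.ne_zero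
  have hγn : γ (2*n) = t0 + t1 + n := hγe n
  have hγodd : γ (2*n - 1) = -(γ (2*n)) := by
    have h1 : 2*n - 1 = 2*(n-1) + 1 := by omega
    rw [h1, hγo, hγn, Nat.cast_sub hn]
    push_cast
    ring
  have hγn0 : γ (2*n) ≠ 0 := by
    intro h
    apply hreg (2*n)
    rw [hγn] at h
    push_cast
    linear_combination 2*h
  have hkeyS : γ (2*n) * γ (2*n) + t1*t1 - t0*t0 = 2*(γ (2*n) * bb (2*n)) := by
    rw [hbb]
    have h2γ : (2:ℂ) * γ (2*n) ≠ 0 := mul_ne_zero two_ne_zero hγn0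
    field_simp
    ring
  have hkeyC : C (γ (2*n)) * C (γ (2*n)) + C t1 * C t1 - C t0 * C t0
      = 2 * (C (γ (2*n)) * C (bb (2*n))) := by
    simpa only [map_mul, map_add, map_sub, map_ofNat] using congrArg C hkeyS
  have heigP : T0 (p (2*n)) + T1 (p (2*n)) = C (γ (2*n)) * p (2*n) := by
    rw [heigP0, smul_eq_C_mul]
  have heigP' : T0 (p (2*n - 1)) + T1 (p (2*n - 1)) = C (γ (2*n - 1)) * p (2*n - 1) := by
    rw [heigP'0, smul_eq_C_mul]
  have heigP'neg : T0 (p (2*n - 1)) + T1 (p (2*n - 1)) = -(C (γ (2*n)) * p (2*n - 1)) := by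
    rw [heigP', hγodd, map_neg]
    ring
  -- leading coefficient of T1 p_{2n-1} in degree 2n
  obtain ⟨k, hk⟩ : ∃ k, 2*n = k + 1 := ⟨2*n - 1, by omega⟩
  have hk' : 2*n - 1 = k := by omega
  have hdegk : (p (2*n - 1)).natDegree = k := by rw [hdegP', hk']
  have hgd : ((p (2*n - 1)).comp (-X) - p (2*n - 1)).natDegree ≤ k := by
    apply le_trans (natDegree_sub_le _ _)
    have : ((p (2*n - 1)).comp (-X)).natDegree = k := by
      rw [natDegree_comp, hdegk]
      simp
    simp [this, hdegk]
  have hgk : ((p (2*n - 1)).comp (-X) - p (2*n - 1)).coeff k = -2 := by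
    have hkodd : Odd k := ⟨n - 1, by omega⟩
    have hc1 : ((p (2*n - 1)).comp (-X)).natDegree = k := by
      rw [natDegree_comp, hdegk]; simp
    have hl1 : ((p (2*n - 1)).comp (-X)).coeff k = -1 := by
      conv_lhs => rw [← hc1]
      rw [coeff_natDegree, leadingCoeff_comp (by simp : (-X : ℂ[X]).natDegree ≠ 0)]
      rw [show (-X : ℂ[X]).leadingCoeff = -1 by rw [leadingCoeff_neg, leadingCoeff_X],
        hmonP'.leadingCoeff, hdegP', hk', hkodd.neg_one_pow]
      ring
    have hl2 : (p (2*n - 1)).coeff k = 1 := by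
      have h' := hmonP'.coeff_natDegree
      rwa [hdegk] at h'
    rw [coeff_sub, hl1, hl2]
    norm_num
  have hB : (T1 (p (2*n - 1))).coeff (2*n) = -1 := by
    have hco := congrArg (fun q : ℂ[X] => q.coeff (k+1+1)) (hI1 (p (2*n - 1)))
    rw [show (2*X : ℂ[X]) * (T1 (p (2*n - 1)) - C t1 * p (2*n - 1))
        = X * ((T1 (p (2*n - 1)) - C t1 * p (2*n - 1))
            + (T1 (p (2*n - 1)) - C t1 * p (2*n - 1))) by ring] at hco
    rw [show ((C t1 + C u1 + X) * (C t1 - C u1 + X)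
            * ((p (2*n - 1)).comp (-X) - p (2*n - 1)) : ℂ[X])
        = C t1 * (C t1 * ((p (2*n - 1)).comp (-X) - p (2*n - 1)))
          - C u1 * (C u1 * ((p (2*n - 1)).comp (-X) - p (2*n - 1)))
          + C t1 * (X * ((p (2*n - 1)).comp (-X) - p (2*n - 1)))
          + C t1 * (X * ((p (2*n - 1)).comp (-X) - p (2*n - 1)))
          + X * (X * ((p (2*n - 1)).comp (-X) - p (2*n - 1))) by ring] at hco
    have hz1 : ((p (2*n - 1)).comp (-X) - p (2*n - 1)).coeff (k+1) = 0 :=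
      coeff_eq_zero_of_natDegree_lt (lt_of_le_of_lt hgd (by omega))
    have hz2 : ((p (2*n - 1)).comp (-X) - p (2*n - 1)).coeff (k+1+1) = 0 :=
      coeff_eq_zero_of_natDegree_lt (lt_of_le_of_lt hgd (by omega))
    have hzP : (p (2*n - 1)).coeff (k+1) = 0 :=
      coeff_eq_zero_of_natDegree_lt (by rw [hdegk]; omega)
    simp only [coeff_X_mul, coeff_add, coeff_sub, coeff_C_mul, hz1, hz2, hzP, hgk] at hco
    rw [hk'] at hco ⊢
    rw [hk]
    linear_combination hco / 2
  -- the expansion of T1 p_{2n}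
  have hTPex : ∃ cc : ℂ, T1 (p (2*n)) = C (bb (2*n)) * p (2*n) + C cc * p (2*n - 1) := by
    have hA := hrel (p (2*n)) (γ (2*n)) heigP
    rcases eq_or_ne (T1 (p (2*n)) - C (bb (2*n)) * p (2*n)) 0 with hr | hr
    · exact ⟨0, by rw [map_zero]; linear_combination hr⟩
    · have hYr : T0 (T1 (p (2*n)) - C (bb (2*n)) * p (2*n))
          + T1 (T1 (p (2*n)) - C (bb (2*n)) * p (2*n))
          = C (γ (2*n - 1)) * (T1 (p (2*n)) - C (bb (2*n)) * p (2*n)) := by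
        rw [hT0sub, hT1sub, hT0smul, hT1smul, hγodd, map_neg]
        linear_combination hA - C (bb (2*n)) * heigP + p (2*n) * hkeyC
      obtain ⟨hlam, hform⟩ := specD _ _ rfl hr _ hYr
      have hnd : (T1 (p (2*n)) - C (bb (2*n)) * p (2*n)).natDegree = 2*n - 1 :=
        (hγinj _ _ hlam).symm
      rw [hnd] at hform
      exact ⟨(T1 (p (2*n)) - C (bb (2*n)) * p (2*n)).leadingCoeff, by linear_combination hform⟩
  obtain ⟨cc, hTP⟩ := hTPex
  -- the expansion of T1 p_{2n-1}
  have hTP' : T1 (p (2*n - 1)) = -(C (bb (2*n)) * p (2*n - 1)) - p (2*n) := by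
    have hA' := hrel (p (2*n - 1)) (γ (2*n - 1)) heigP'
    rw [hγodd, map_neg] at hA'
    have hYr' : T0 (T1 (p (2*n - 1)) + C (bb (2*n)) * p (2*n - 1))
        + T1 (T1 (p (2*n - 1)) + C (bb (2*n)) * p (2*n - 1))
        = C (γ (2*n)) * (T1 (p (2*n - 1)) + C (bb (2*n)) * p (2*n - 1)) := by
      rw [hT0add, hT1add, hT0smul, hT1smul]
      linear_combination hA' + C (bb (2*n)) * heigP'neg + p (2*n - 1) * hkeyC
    have hrc : (T1 (p (2*n - 1)) + C (bb (2*n)) * p (2*n - 1)).coeff (2*n) = -1 := by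
      rw [coeff_add, hB, coeff_C_mul,
        coeff_eq_zero_of_natDegree_lt (by rw [hdegP']; omega)]
      ring
    have hr0 : T1 (p (2*n - 1)) + C (bb (2*n)) * p (2*n - 1) ≠ 0 := by
      intro h
      rw [h] at hrc
      simp at hrc
    obtain ⟨hlam, hform⟩ := specD _ _ rfl hr0 _ hYr'
    have hnd : (T1 (p (2*n - 1)) + C (bb (2*n)) * p (2*n - 1)).natDegree = 2*n :=
      (hγinj _ _ hlam).symm
    have hlc : (T1 (p (2*n - 1)) + C (bb (2*n)) * p (2*n - 1)).leadingCoeff = -1 := by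
      rw [← coeff_natDegree, hnd]
      exact hrc
    rw [hnd, hlc, map_neg, map_one] at hform
    linear_combination hform
  -- the scalar relation cc = bb² - t1²
  have hfactor : C (bb (2*n)) * C (bb (2*n)) - C cc - C t1 * C t1 = 0 := by
    have h := hH1 (p (2*n))
    rw [hTP, hT1add, hT1smul, hT1smul, hTP, hTP'] at h
    have hz : (C (bb (2*n)) * C (bb (2*n)) - C cc - C t1 * C t1) * p (2*n) = 0 := by
      linear_combination h
    exact (mul_eq_zero.mp hz).resolve_right hPne
  -- independence of p_{2n}, p_{2n-1}
  have hPc : (p (2*n)).coeff (2*n) = 1 := by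
    have h' := hmonP.coeff_natDegree
    rwa [hdegP] at h'
  have hP'c : (p (2*n - 1)).coeff (2*n) = 0 :=
    coeff_eq_zero_of_natDegree_lt (by rw [hdegP']; omega)
  have hindep : ∀ s t : ℂ, C s * p (2*n) + C t * p (2*n - 1) = 0 → s = 0 ∧ t = 0 := by
    intro s t h
    have hs : s = 0 := by
      have hco := congrArg (fun q : ℂ[X] => q.coeff (2*n)) h
      simpa [coeff_add, coeff_C_mul, hPc, hP'c] using hco
    refine ⟨hs, ?_⟩
    rw [hs, map_zero, zero_mul, zero_add] at h
    rcases mul_eq_zero.mp h with h' | h'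
    · exact C_injective (by simpa using h')
    · exact absurd h' hP'ne
  -- degree facts
  have hdegPlt : (p (2*n - 1)).degree < (p (2*n)).degree := by
    rw [degree_eq_natDegree hPne, degree_eq_natDegree hP'ne, hdegP, hdegP']
    exact_mod_cast (by omega : 2*n - 1 < 2*n)
  constructor
  · constructor
    · -- monic
      exact hmonP.add_of_left (lt_of_le_of_lt (degree_smul_le _ _) hdegPlt)
    constructor
    · -- even
      intro x
      have hTplus : T1 (p (2*n) + C (bb (2*n) - t1) * p (2*n - 1))
          = C t1 * (p (2*n) + C (bb (2*n) - t1) * p (2*n - 1)) := by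
        rw [hT1add, hT1smul, hTP, hTP', map_sub]
        linear_combination -(p (2*n - 1)) * hfactor
      have hI := hI1 (p (2*n) + C (bb (2*n) - t1) * p (2*n - 1))
      rw [hTplus] at hI
      have hz : (p (2*n) + C (bb (2*n) - t1) * p (2*n - 1)).comp (-X)
          - (p (2*n) + C (bb (2*n) - t1) * p (2*n - 1)) = 0 := by
        have hM : ((C t1 + C u1 + X) * (C t1 - C u1 + X) : ℂ[X]) ≠ 0 := by
          intro h
          have h1 := congrArg (eval (1 - (t1+u1))) h
          have h2 := congrArg (eval (1 - (t1-u1))) h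
          simp only [eval_mul, eval_add, eval_sub, eval_C, eval_X, eval_zero] at h1 h2
          rcases mul_eq_zero.mp h1 with h' | h'
          · exact one_ne_zero (by linear_combination h')
          · rcases mul_eq_zero.mp h2 with h'' | h''
            · exact (by norm_num : (2:ℂ) ≠ 0) (by linear_combination h' + h'')
            · exact one_ne_zero (by linear_combination h'')
        have h0 : ((C t1 + C u1 + X) * (C t1 - C u1 + X))
            * ((p (2*n) + C (bb (2*n) - t1) * p (2*n - 1)).comp (-X)
              - (p (2*n) + C (bb (2*n) - t1) * p (2*n - 1))) = 0 := by
          linear_combination -hI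
        exact (mul_eq_zero.mp h0).resolve_left hM
      have := congrArg (eval x) (sub_eq_zero.mp hz)
      rw [eval_comp] at this
      simp only [eval_neg, eval_X] at this
      rw [smul_eq_C_mul]
      linear_combination -this
    · -- uniqueness
      intro q hqmon hqeven ⟨α, β, hq⟩
      rw [smul_eq_C_mul, smul_eq_C_mul] at hq
      have hqc : q.comp (-X) = q := by
        apply Polynomial.funext
        intro x
        rw [eval_comp]
        simp only [eval_neg, eval_X]
        exact (hqeven x).symm
      have hTq : T1 q = C t1 * q := by
        apply mul_left_cancel₀ h2X
        have h := hI1 q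
        rw [hqc] at h
        linear_combination h
      rw [hq, hT1add, hT1smul, hT1smul, hTP, hTP'] at hTq
      have hcomb : C (α * bb (2*n) - β - t1 * α) * p (2*n)
          + C (α * cc - β * bb (2*n) - t1 * β) * p (2*n - 1) = 0 := by
        simp only [map_sub, map_mul]
        linear_combination hTq
      obtain ⟨hs1, hs2⟩ := hindep _ _ hcomb
      -- α = 1
      have hα : α = 1 := by
        have hqd : q.natDegree = 2*n := by
          have hle : q.natDegree ≤ 2*n := by
            rw [hq]
            apply le_trans (natDegree_add_le _ _)
            apply max_le
            · exact le_trans (natDegree_C_mul_le _ _) (le_of_eq hdegP)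
            · exact le_trans (natDegree_C_mul_le _ _) (by rw [hdegP']; omega)
          have hcoq : q.coeff (2*n) = α := by
            rw [hq]
            simp [coeff_add, coeff_C_mul, hPc, hP'c]
          by_cases hα0 : α = 0
          · exfalso
            rw [hα0] at hs1
            have hβ : β = 0 := by linear_combination -hs1
            rw [hα0, hβ] at hq
            simp only [map_zero, zero_mul, add_zero, zero_add] at hq
            exact not_monic_zero (hq ▸ hqmon)
          · have := le_natDegree_of_ne_zero (n := 2*n) (p := q) (by rw [hcoq]; exact hα0)
            omega
        have h1 := hqmon.coeff_natDegree
        rw [hqd] at h1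
        rw [hq] at h1
        simp only [coeff_add, coeff_C_mul, hPc, hP'c] at h1
        linear_combination h1
      have hβ : β = bb (2*n) - t1 := by
        rw [hα] at hs1
        linear_combination -hs1
      rw [hq, hα, hβ, map_one, one_mul, smul_eq_C_mul]
  · -- the -t1 eigenvector
    rw [smul_eq_C_mul, smul_eq_C_mul]
    rw [hT1add, hT1smul, hTP, hTP', map_add, map_neg]
    linear_combination -(p (2*n - 1)) * hfactor
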